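/- The expected value of the Some-to-All estimator is a lower bound on the marginal log-likelihood: with Φ uniform over S-element subsets of Fin A and z_s ∼ q_{φ_s} for φ_s ∈ Φ, E[(1/S)∑_{s ∈ Φ} log(p(x,z_s)/((1/A)∑_{a=1}^A q_{φ_a}(z_s|x)))] ≤ log p(x). -/

import Mathlib

open MeasureTheory Finset

/-- The expected value of the Some-to-All estimator is a lower bound on the
marginal log-likelihood. -/
theorem some_to_all_expectation_le_log_marginal
    {Z : Type*} [MeasurableSpace Z] (μ : Measure Z) [SigmaFinite μ]
    (A S : ℕ) (hS : 1 ≤ S) (hSA : S ≤ A)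
    (p : Z → ℝ) (hp : ∀ z, 0 < p z) (hpInt : Integrable p μ)
    (q : Fin A → Z → ℝ)
    (hq0 : ∀ a z, 0 < q a z) (hq1 : ∀ a, ∫ z, q a z ∂μ = 1)
    (hInt : ∀ a, Integrable
      (fun z => q a z * Real.log (p z / ((1 / (A : ℝ)) * ∑ a', q a' z))) μ) :
    ∑ Φ ∈ Finset.powersetCard S (Finset.univ : Finset (Fin A)),
        (1 / (A.choose S : ℝ)) * ((1 / (S : ℝ)) *
          ∑ s ∈ Φ, ∫ z, q s z * Real.log (p z / ((1 / (A : ℝ)) * ∑ a, q a z)) ∂μ)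
      ≤ Real.log (∫ z, p z ∂μ) := by
  classical
  have hA : 1 ≤ A := hS.trans hSA
  have hA0 : (0:ℝ) < A := by exact_mod_cast hA
  have hS0 : (0:ℝ) < S := by exact_mod_cast hS
  have hC0 : (0:ℝ) < A.choose S := by exact_mod_cast Nat.choose_pos hSA
  set I : Fin A → ℝ :=
    fun s => ∫ z, q s z * Real.log (p z / ((1 / (A : ℝ)) * ∑ a, q a z)) ∂μ with hI
  -- counting: number of S-subsets containing a fixed element
  have hcard : ∀ s : Fin A,
      ((Finset.powersetCard S (Finset.univ : Finset (Fin A))).filter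
        (fun Φ => s ∈ Φ)).card = (A-1).choose (S-1) := by
    intro s
    have : ((Finset.powersetCard S (Finset.univ : Finset (Fin A))).filter
        (fun Φ => s ∈ Φ)).card
        = (Finset.powersetCard (S-1) ((Finset.univ : Finset (Fin A)).erase s)).card := by
      apply Finset.card_nbij' (fun Φ => Φ.erase s) (fun Ψ => insert s Ψ)
      · intro Φ hΦ
        simp only [Finset.mem_coe, Finset.mem_filter, Finset.mem_powersetCard] at hΦ ⊢
        refine ⟨Finset.erase_subset_erase s hΦ.1.1, ?_⟩
        rw [Finset.card_erase_of_mem hΦ.2, hΦ.1.2]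
      · intro Ψ hΨ
        simp only [Finset.mem_coe, Finset.mem_powersetCard] at hΨ
        have hsΨ : s ∉ Ψ := fun h => (Finset.mem_erase.mp (hΨ.1 h)).1 rfl
        simp only [Finset.mem_coe, Finset.mem_filter, Finset.mem_powersetCard]
        refine ⟨⟨Finset.subset_univ _, ?_⟩, Finset.mem_insert_self _ _⟩
        rw [Finset.card_insert_of_notMem hsΨ, hΨ.2]
        omega
      · intro Φ hΦ
        simp only [Finset.mem_coe, Finset.mem_filter] at hΦ
        exact Finset.insert_erase hΦ.2
      · intro Ψ hΨ
        simp only [Finset.mem_coe, Finset.mem_powersetCard] at hΨ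
        have hsΨ : s ∉ Ψ := fun h => (Finset.mem_erase.mp (hΨ.1 h)).1 rfl
        exact Finset.erase_insert hsΨ
    rw [this, Finset.card_powersetCard, Finset.card_erase_of_mem (Finset.mem_univ s),
      Finset.card_univ, Fintype.card_fin]
  -- rewrite the LHS as (1/A) * ∑ I s
  have hLHS : ∑ Φ ∈ Finset.powersetCard S (Finset.univ : Finset (Fin A)),
      (1 / (A.choose S : ℝ)) * ((1 / (S : ℝ)) * ∑ s ∈ Φ, I s)
      = (1 / (A:ℝ)) * ∑ s, I s := by
    have hswap : ∑ Φ ∈ Finset.powersetCard S (Finset.univ : Finset (Fin A)),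
        ∑ s ∈ Φ, I s = ∑ s : Fin A, ((A-1).choose (S-1) : ℝ) * I s := by
      have : ∀ Φ ∈ Finset.powersetCard S (Finset.univ : Finset (Fin A)),
          ∑ s ∈ Φ, I s = ∑ s : Fin A, if s ∈ Φ then I s else 0 := by
        intro Φ _
        simp
      rw [Finset.sum_congr rfl this, Finset.sum_comm]
      refine Finset.sum_congr rfl fun s _ => ?_
      trans (∑ Φ ∈ (Finset.powersetCard S (Finset.univ : Finset (Fin A))).filter
        (fun Φ => s ∈ Φ), I s)
      · exact (Finset.sum_filter (fun Φ => s ∈ Φ) (fun _ => I s)).symm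
      · rw [Finset.sum_const, hcard s, nsmul_eq_mul]
    simp only [← Finset.mul_sum]
    rw [hswap]
    simp only [Finset.mul_sum]
    refine Finset.sum_congr rfl fun s _ => ?_
    have hkey : (A:ℝ) * ((A-1).choose (S-1) : ℝ) = (A.choose S : ℝ) * S := by
      have := Nat.add_one_mul_choose_eq (A-1) (S-1)
      have h1 : A-1+1 = A := by omega
      have h2 : S-1+1 = S := by omega
      rw [h1, h2] at this
      exact_mod_cast this
    field_simp
    ring_nf
    linear_combination I s * hkey
  rw [hLHS]
  -- analytic part
  set g : Z → ℝ := fun z => (1 / (A : ℝ)) * ∑ a, q a z with hg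
  have hg0 : ∀ z, 0 < g z := by
    intro z
    have : 0 < ∑ a, q a z :=
      Finset.sum_pos (fun a _ => hq0 a z) (Finset.univ_nonempty_iff.2 ⟨⟨0, hA⟩⟩)
    positivity
  have hqInt : ∀ a, Integrable (q a) μ := by
    intro a
    by_contra h
    have h1 := hq1 a
    rw [integral_undef h] at h1
    exact one_ne_zero h1.symm
  have hgInt : Integrable g μ :=
    (integrable_finset_sum _ fun a _ => hqInt a).const_mul _
  have hglogInt : Integrable (fun z => g z * Real.log (p z / g z)) μ := by
    have h := (integrable_finset_sum Finset.univ fun a (_ : a ∈ Finset.univ) => hInt a).const_mul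
      (1 / (A:ℝ))
    refine h.congr (Filter.Eventually.of_forall fun z => ?_)
    simp only [hg, Finset.sum_mul, Finset.mul_sum, mul_assoc]
  have hgI : ∫ z, g z ∂μ = 1 := by
    rw [hg]
    simp only [integral_const_mul]
    rw [integral_finset_sum _ fun a _ => hqInt a]
    simp [hq1]
    field_simp
  have hμ : μ ≠ 0 := by
    intro h
    have := hq1 ⟨0, hA⟩
    rw [h] at this
    simp at this
  have hT : 0 < ∫ z, p z ∂μ := by
    rw [integral_pos_iff_support_of_nonneg (fun z => (hp z).le) hpInt]
    have : Function.support p = Set.univ := by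
      ext z; simp [Function.support, (hp z).ne']
    rw [this]
    simpa [pos_iff_ne_zero] using fun h => hμ (Measure.measure_univ_eq_zero.mp h)
  set T : ℝ := ∫ z, p z ∂μ with hTdef
  -- pointwise bound
  have key : ∀ z, g z * Real.log (p z / g z)
      ≤ p z / T - g z + g z * Real.log T := by
    intro z
    have hgz := hg0 z
    have hpz := hp z
    have hlog : Real.log (p z / g z)
        = Real.log (p z / (T * g z)) + Real.log T := by
      rw [← Real.log_mul (by positivity) hT.ne']
      congr 1
      field_simp
    rw [hlog, mul_add]
    have h1 : Real.log (p z / (T * g z)) ≤ p z / (T * g z) - 1 :=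
      Real.log_le_sub_one_of_pos (by positivity)
    have h2 : g z * Real.log (p z / (T * g z)) ≤ g z * (p z / (T * g z) - 1) :=
      mul_le_mul_of_nonneg_left h1 hgz.le
    have h3 : g z * (p z / (T * g z) - 1) = p z / T - g z := by
      field_simp
    linarith
  -- the goal as an integral of g * log (p/g)
  have hgoal : (1 / (A:ℝ)) * ∑ s, I s = ∫ z, g z * Real.log (p z / g z) ∂μ := by
    rw [hI]
    rw [← integral_finset_sum _ fun a _ => hInt a, ← integral_const_mul]
    congr 1
    funext z
    simp only [hg, Finset.sum_mul, Finset.mul_sum, mul_assoc]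
  rw [hgoal]
  have hRHSInt : Integrable (fun z => p z / T - g z + g z * Real.log T) μ :=
    ((hpInt.div_const T).sub hgInt).add (hgInt.mul_const _)
  calc ∫ z, g z * Real.log (p z / g z) ∂μ
      ≤ ∫ z, (p z / T - g z + g z * Real.log T) ∂μ :=
        integral_mono hglogInt hRHSInt key
    _ = Real.log T := by
        have h1 : Integrable (fun z => p z / T - g z) μ := (hpInt.div_const T).sub hgInt
        rw [integral_add h1 (hgInt.mul_const _),
          integral_sub (hpInt.div_const T) hgInt, integral_div, integral_mul_const,
          hgI, ← hTdef, div_self hT.ne']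
        ring
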